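/- Let n be a positive integer, let ι and κ be finite index types, let (A_i)_{i∈ι} and (B_j)_{j∈κ} be families of positive semidefinite matrices in M_n(ℂ) such that A_i B_j = B_j A_i for all i ∈ ι and j ∈ κ, and let τ ∈ M_n(ℂ) be positive semidefinite with Tr(τ) = 1. Then there exist positive integers m₁, m₂, families of positive semidefinite matrices (Â_i)_{i∈ι} in M_{m₁}(ℂ) and (B̂_j)_{j∈κ} in M_{m₂}(ℂ), and a positive semidefinite matrix τ̂ indexed by Fin m₁ × Fin m₂ with Tr(τ̂) = 1, such that for every finite list i₁,…,i_k of indices in ι and every finite list j₁,…,j_l of indices in κ: Tr(τ · A_{i₁}⋯A_{i_k} · B_{j₁}⋯B_{j_l}) = Tr(τ̂ · ((Â_{i₁}⋯Â_{i_k}) ⊗ (B̂_{j₁}⋯B̂_{j_l}))), where ⊗ denotes the Kronecker product. -/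

import Mathlib

open Matrix Kronecker
open scoped ComplexOrder

namespace Tsi
open Polynomial
set_option linter.unusedSectionVars false
set_option linter.unusedVariables false
set_option linter.unnecessarySimpa false
set_option maxHeartbeats 1000000

variable {N : Type*} [Fintype N] [DecidableEq N]

omit [DecidableEq N] in
private lemma trace_normSq (x : Matrix N N ℂ) :
    (xᴴ * x).trace = ((∑ j, ∑ i, Complex.normSq (x i j) : ℝ) : ℂ) := by
  push_cast
  simp [Matrix.trace, Matrix.diag, Matrix.mul_apply, Matrix.conjTranspose_apply,
    Complex.normSq_eq_conj_mul_self]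

noncomputable def mCore (N : Type*) [Fintype N] [DecidableEq N] :
    InnerProductSpace.Core ℂ (Matrix N N ℂ) where
  inner X Y := (Xᴴ * Y).trace
  conj_inner_symm x y := by
    have h : (xᴴ * y) = (yᴴ * x)ᴴ := by simp [Matrix.conjTranspose_mul]
    show (starRingEnd ℂ) ((yᴴ * x).trace) = (xᴴ * y).trace
    rw [h, Matrix.trace_conjTranspose]
    rfl
  re_inner_nonneg x := by
    show 0 ≤ RCLike.re ((xᴴ * x).trace)
    rw [trace_normSq]
    show (0:ℝ) ≤ (((∑ j, ∑ i, Complex.normSq (x i j) : ℝ)) : ℂ).re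
    rw [Complex.ofReal_re]
    exact Finset.sum_nonneg fun j _ => Finset.sum_nonneg fun i _ => Complex.normSq_nonneg _
  add_left x y z := by
    show ((x + y)ᴴ * z).trace = (xᴴ * z).trace + (yᴴ * z).trace
    simp [Matrix.conjTranspose_add, Matrix.add_mul]
  smul_left x y r := by
    show ((r • x)ᴴ * y).trace = (starRingEnd ℂ) r * (xᴴ * y).trace
    simp [Matrix.conjTranspose_smul, Matrix.smul_mul, Matrix.trace_smul, smul_eq_mul]
  definite x := by
    intro hx
    replace hx : ((xᴴ * x).trace : ℂ) = 0 := hx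
    rw [trace_normSq] at hx
    norm_cast at hx
    have h2 := (Finset.sum_eq_zero_iff_of_nonneg (fun j _ => Finset.sum_nonneg
      (fun i _ => Complex.normSq_nonneg _))).mp hx
    ext i j
    have h3 := (Finset.sum_eq_zero_iff_of_nonneg
      (fun i _ => Complex.normSq_nonneg (x i j))).mp (h2 j (Finset.mem_univ j)) i
      (Finset.mem_univ i)
    simpa using Complex.normSq_eq_zero.mp h3

noncomputable instance : NormedAddCommGroup (Matrix N N ℂ) := (mCore N).toNormedAddCommGroup
noncomputable instance : InnerProductSpace ℂ (Matrix N N ℂ) := .ofCore (mCore N).toCore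

lemma inner_def (X Y : Matrix N N ℂ) : (inner ℂ X Y : ℂ) = (Xᴴ * Y).trace := rfl

example (S : Submodule ℂ (Matrix N N ℂ)) (v : Matrix N N ℂ) :
    v - Submodule.orthogonalProjectionOnto S v ∈ Sᗮ := Submodule.sub_starProjection_mem_orthogonal v

section Main
variable {n : ℕ} {ι κ : Type*}
variable (A : ι → Matrix (Fin n) (Fin n) ℂ) (B : κ → Matrix (Fin n) (Fin n) ℂ)

def G : Set (Matrix (Fin n × Fin n) (Fin n × Fin n) ℂ) :=
  {Z | ∃ (la : List ι) (lb : List κ), Z = ((la.map A).prod) ⊗ₖ ((lb.map B).prod)}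

noncomputable def S : Submodule ℂ (Matrix (Fin n × Fin n) (Fin n × Fin n) ℂ) :=
  Submodule.span ℂ (G A B)

variable {A B}

lemma A_comm_prodB (hcomm : ∀ i j, A i * B j = B j * A i) (i : ι) :
    ∀ lb : List κ, A i * (lb.map B).prod = (lb.map B).prod * A i := by
  intro lb
  induction lb with
  | nil => simp
  | cons j l ih =>
      simp only [List.map_cons, List.prod_cons, ← Matrix.mul_assoc, hcomm i j]
      rw [Matrix.mul_assoc, ih, ← Matrix.mul_assoc]

lemma prod_comm (hcomm : ∀ i j, A i * B j = B j * A i) (la : List ι) (lb : List κ) :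
    (lb.map B).prod * (la.map A).prod = (la.map A).prod * (lb.map B).prod := by
  induction la with
  | nil => simp
  | cons i l ih =>
      simp only [List.map_cons, List.prod_cons]
      rw [← Matrix.mul_assoc, ← A_comm_prodB hcomm i lb, Matrix.mul_assoc, ih,
        ← Matrix.mul_assoc]

lemma prod_star {α : Type*} (C : α → Matrix (Fin n) (Fin n) ℂ)
    (hC : ∀ i, (C i).IsHermitian) :
    ∀ l : List α, ((l.map C).prod)ᴴ = (l.reverse.map C).prod := by
  intro l
  induction l with
  | nil => simp
  | cons i l ih =>
      simp only [List.map_cons, List.prod_cons, Matrix.conjTranspose_mul, ih,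
        List.reverse_cons, List.map_append, List.prod_append, List.map_cons, List.map_nil,
        List.prod_cons, List.prod_nil, (hC i).eq, Matrix.mul_one]

lemma kron_conjTranspose (P Q : Matrix (Fin n) (Fin n) ℂ) :
    (P ⊗ₖ Q)ᴴ = Pᴴ ⊗ₖ Qᴴ := by
  ext ⟨a, b⟩ ⟨c, d⟩
  simp [Matrix.conjTranspose_apply, Matrix.kroneckerMap_apply]

lemma one_mem_G : (1 : Matrix (Fin n × Fin n) (Fin n × Fin n) ℂ) ∈ G A B :=
  ⟨[], [], by simp [Matrix.one_kronecker_one]⟩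

lemma mul_mem_G {x y : Matrix (Fin n × Fin n) (Fin n × Fin n) ℂ}
    (hx : x ∈ G A B) (hy : y ∈ G A B) : x * y ∈ G A B := by
  obtain ⟨la, lb, rfl⟩ := hx
  obtain ⟨la', lb', rfl⟩ := hy
  exact ⟨la ++ la', lb ++ lb', by
    simp [Matrix.mul_kronecker_mul, List.map_append, List.prod_append]⟩

lemma star_mem_G (hA : ∀ i, (A i).IsHermitian) (hB : ∀ j, (B j).IsHermitian)
    {x : Matrix (Fin n × Fin n) (Fin n × Fin n) ℂ} (hx : x ∈ G A B) : star x ∈ G A B := by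
  obtain ⟨la, lb, rfl⟩ := hx
  refine ⟨la.reverse, lb.reverse, ?_⟩
  rw [Matrix.star_eq_conjTranspose, kron_conjTranspose, prod_star A hA, prod_star B hB]

lemma one_mem_S : (1 : Matrix (Fin n × Fin n) (Fin n × Fin n) ℂ) ∈ S A B :=
  Submodule.subset_span one_mem_G

lemma mul_mem_S {x y : Matrix (Fin n × Fin n) (Fin n × Fin n) ℂ}
    (hx : x ∈ S A B) (hy : y ∈ S A B) : x * y ∈ S A B := by
  induction hx using Submodule.span_induction generalizing y with
  | mem z hz =>
      induction hy using Submodule.span_induction with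
      | mem w hw => exact Submodule.subset_span (mul_mem_G hz hw)
      | zero => simpa using (S A B).zero_mem
      | add u v _ _ hu hv => rw [Matrix.mul_add]; exact (S A B).add_mem hu hv
      | smul c u _ hu => rw [mul_smul_comm]; exact (S A B).smul_mem c hu
  | zero => simpa using (S A B).zero_mem
  | add u v _ _ hu hv => rw [Matrix.add_mul]; exact (S A B).add_mem (hu hy) (hv hy)
  | smul c u _ hu => rw [smul_mul_assoc]; exact (S A B).smul_mem c (hu hy)

lemma star_mem_S (hA : ∀ i, (A i).IsHermitian) (hB : ∀ j, (B j).IsHermitian)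
    {x : Matrix (Fin n × Fin n) (Fin n × Fin n) ℂ} (hx : x ∈ S A B) : star x ∈ S A B := by
  induction hx using Submodule.span_induction with
  | mem z hz => exact Submodule.subset_span (star_mem_G hA hB hz)
  | zero => simpa using (S A B).zero_mem
  | add u v _ _ hu hv => rw [star_add]; exact (S A B).add_mem hu hv
  | smul c u _ hu => rw [star_smul]; exact (S A B).smul_mem _ hu

lemma pow_mem_S {x : Matrix (Fin n × Fin n) (Fin n × Fin n) ℂ}
    (hx : x ∈ S A B) : ∀ k : ℕ, x ^ k ∈ S A B := by
  intro k
  induction k with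
  | zero => simpa [pow_zero] using one_mem_S
  | succ k ih => rw [pow_succ]; exact mul_mem_S ih hx

lemma aeval_mem_S {x : Matrix (Fin n × Fin n) (Fin n × Fin n) ℂ}
    (hx : x ∈ S A B) (q : ℂ[X]) : Polynomial.aeval x q ∈ S A B := by
  induction q using Polynomial.induction_on with
  | C a => simpa [Algebra.algebraMap_eq_smul_one] using (S A B).smul_mem a one_mem_S
  | add p q hp hq => rw [map_add]; exact (S A B).add_mem hp hq
  | monomial k a _ =>
      rw [_root_.map_mul, Polynomial.aeval_C, Polynomial.aeval_X_pow, pow_succ]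
      rw [← Matrix.mul_assoc]
      refine mul_mem_S ?_ hx
      simpa [Algebra.algebraMap_eq_smul_one, smul_mul_assoc] using
        (S A B).smul_mem a (pow_mem_S hx k)

end Main

section Phi
variable {n : ℕ}

/-- The "multiplication" linear contraction `M_{n²} → M_n`. -/
noncomputable def Phi (Z : Matrix (Fin n × Fin n) (Fin n × Fin n) ℂ) : Matrix (Fin n) (Fin n) ℂ :=
  Matrix.of fun p q => ∑ r, Z (p, r) (r, q)

lemma Phi_kron (P Q : Matrix (Fin n) (Fin n) ℂ) : Phi (P ⊗ₖ Q) = P * Q := by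
  ext p q
  simp [Phi, Matrix.mul_apply, Matrix.kroneckerMap_apply]

lemma Phi_add (Z W : Matrix (Fin n × Fin n) (Fin n × Fin n) ℂ) :
    Phi (Z + W) = Phi Z + Phi W := by
  ext p q
  simp [Phi, Finset.sum_add_distrib]

lemma Phi_smul (c : ℂ) (Z : Matrix (Fin n × Fin n) (Fin n × Fin n) ℂ) :
    Phi (c • Z) = c • Phi Z := by
  ext p q
  simp [Phi, Finset.mul_sum]

end Phi

section Spectral
variable {N : Type*} [Fintype N] [DecidableEq N]

lemma uconj_pow (U D : Matrix N N ℂ) (hU : U * star U = 1) :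
    ∀ k : ℕ, (U * D * star U) ^ k = U * D ^ k * star U := by
  intro k
  induction k with
  | zero => simp [pow_zero, hU]
  | succ k ih =>
      rw [pow_succ, ih, pow_succ]
      have : star U * (U * D * star U) = D * star U := by
        have h2 : star U * U = 1 := mul_eq_one_comm.mp hU
        rw [← Matrix.mul_assoc, ← Matrix.mul_assoc, h2, Matrix.one_mul]
      rw [Matrix.mul_assoc (U * D ^ k), this, ← Matrix.mul_assoc, ← Matrix.mul_assoc]

lemma aeval_unitary_conj (U D : Matrix N N ℂ) (hU : U * star U = 1) (q : ℂ[X]) :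
    Polynomial.aeval (U * D * star U) q = U * Polynomial.aeval D q * star U := by
  induction q using Polynomial.induction_on with
  | C a =>
      simp only [Polynomial.aeval_C, Algebra.algebraMap_eq_smul_one]
      rw [mul_smul_comm, smul_mul_assoc, Matrix.mul_one, hU]
  | add p q hp hq => rw [map_add, map_add, hp, hq, Matrix.mul_add, Matrix.add_mul]
  | monomial k a _ =>
      rw [_root_.map_mul, _root_.map_mul, Polynomial.aeval_C, Polynomial.aeval_X_pow,
        Polynomial.aeval_X_pow, uconj_pow U D hU]
      simp [Algebra.algebraMap_eq_smul_one, smul_mul_assoc, mul_smul_comm, Matrix.mul_assoc]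

lemma aeval_diagonal (d : N → ℂ) (q : ℂ[X]) :
    Polynomial.aeval (Matrix.diagonal d) q = Matrix.diagonal (fun i => q.eval (d i)) := by
  have h1 : Matrix.diagonal d = Matrix.diagonalAlgHom ℂ d := rfl
  rw [h1, Polynomial.aeval_algHom_apply]
  show Matrix.diagonal (Polynomial.aeval d q) = _
  have h3 : Polynomial.aeval d q = fun i => q.eval (d i) := by
    funext i
    rw [← Polynomial.coe_aeval_eq_eval]
    exact (Polynomial.aeval_algHom_apply (Pi.evalAlgHom ℂ (fun _ : N => ℂ) i) d q).symm
  rw [h3]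

/-- interpolation polynomial matching a real function on the eigenvalues -/
lemma exists_interp (lam : N → ℝ) (f : ℝ → ℝ) :
    ∃ q : ℂ[X], ∀ i, q.eval ((lam i : ℂ)) = ((f (lam i) : ℝ) : ℂ) := by
  classical
  set s : Finset ℂ := Finset.image (fun i => ((lam i : ℝ) : ℂ)) Finset.univ with hs
  refine ⟨Lagrange.interpolate s id (fun z => ((f z.re : ℝ) : ℂ)), fun i => ?_⟩
  have hi : ((lam i : ℝ) : ℂ) ∈ s := Finset.mem_image_of_mem _ (Finset.mem_univ i)
  have := Lagrange.eval_interpolate_at_node (fun z => ((f z.re : ℝ) : ℂ))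
    (Set.injOn_of_injective (f := id) (fun a b h => h)) hi
  simpa using this

end Spectral

section PSDtrace
variable {N : Type*} [Fintype N] [DecidableEq N]

lemma psd_trace_nonneg {P : Matrix N N ℂ} (hP : P.PosSemidef) : 0 ≤ P.trace := by
  rw [Matrix.trace]
  refine Finset.sum_nonneg fun i _ => ?_
  have := hP.dotProduct_mulVec_nonneg (Pi.single i 1)
  simpa [dotProduct, Matrix.mulVec, Pi.single_apply, Matrix.diag] using this

lemma psd_trace_mul_nonneg {P Q : Matrix N N ℂ} (hP : P.PosSemidef) (hQ : Q.PosSemidef) :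
    0 ≤ (P * Q).trace := by
  obtain ⟨m, v, rfl⟩ := Matrix.posSemidef_iff_eq_sum_vecMulVec.mp hQ
  rw [Matrix.mul_sum, Matrix.trace_sum]
  refine Finset.sum_nonneg fun i _ => ?_
  rw [Matrix.vecMulVec_eq (Fin 1), ← Matrix.conjTranspose_replicateCol, ← Matrix.mul_assoc,
    Matrix.trace_mul_cycle]
  exact psd_trace_nonneg (hP.conjTranspose_mul_mul_same _)

end PSDtrace

section FunCalc
variable {N : Type*} [Fintype N] [DecidableEq N]
variable {Y : Matrix N N ℂ} (hY : Y.IsHermitian)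

noncomputable def MF (hY : Y.IsHermitian) (f : ℝ → ℝ) : Matrix N N ℂ :=
  (hY.eigenvectorUnitary : Matrix N N ℂ) *
    Matrix.diagonal (fun i => ((f (hY.eigenvalues i) : ℝ) : ℂ)) *
    star (hY.eigenvectorUnitary : Matrix N N ℂ)

lemma MF_hU :
    (hY.eigenvectorUnitary : Matrix N N ℂ) * star (hY.eigenvectorUnitary : Matrix N N ℂ) = 1 :=
  (Matrix.mem_unitaryGroup_iff).mp (hY.eigenvectorUnitary).2

lemma MF_hU' :
    star (hY.eigenvectorUnitary : Matrix N N ℂ) * (hY.eigenvectorUnitary : Matrix N N ℂ) = 1 :=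
  mul_eq_one_comm.mp (MF_hU hY)

lemma MF_eq_self : MF hY (fun x => x) = Y := by
  rw [MF]
  conv_rhs => rw [hY.spectral_theorem]
  rfl

lemma MF_aeval (f : ℝ → ℝ) : ∃ q : ℂ[X], Polynomial.aeval Y q = MF hY f := by
  obtain ⟨q, hq⟩ := exists_interp hY.eigenvalues f
  refine ⟨q, ?_⟩
  conv_lhs => rw [hY.spectral_theorem, Unitary.conjStarAlgAut_apply]
  rw [aeval_unitary_conj _ _ (MF_hU hY), aeval_diagonal, MF]
  have hd : Matrix.diagonal (fun i => Polynomial.eval ((RCLike.ofReal ∘ hY.eigenvalues) i) q) =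
      Matrix.diagonal (fun i => ((f (hY.eigenvalues i) : ℝ) : ℂ)) := by
    refine congrArg Matrix.diagonal (funext fun i => ?_)
    simpa [RCLike.ofReal] using hq i
  rw [hd]

lemma MF_diag_herm (f : ℝ → ℝ) :
    (Matrix.diagonal (fun i => ((f (hY.eigenvalues i) : ℝ) : ℂ))).IsHermitian := by
  refine Matrix.isHermitian_diagonal_of_self_adjoint _ ?_
  funext i
  exact Complex.conj_ofReal _

lemma MF_herm (f : ℝ → ℝ) : (MF hY f).IsHermitian := by
  rw [MF, Matrix.star_eq_conjTranspose]
  exact Matrix.isHermitian_mul_mul_conjTranspose _ (MF_diag_herm hY f)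

lemma MF_psd {f : ℝ → ℝ} (hf : ∀ x, 0 ≤ f x) : (MF hY f).PosSemidef := by
  rw [MF, Matrix.star_eq_conjTranspose]
  exact (Matrix.PosSemidef.diagonal fun i =>
    Complex.zero_le_real.mpr (hf _)).mul_mul_conjTranspose_same _

lemma MF_mul (f g : ℝ → ℝ) : MF hY f * MF hY g = MF hY (fun x => f x * g x) := by
  have h2' : ∀ M : Matrix N N ℂ, star (hY.eigenvectorUnitary : Matrix N N ℂ) *
      ((hY.eigenvectorUnitary : Matrix N N ℂ) * M) = M := fun M => by
    rw [← Matrix.mul_assoc, MF_hU' hY, Matrix.one_mul]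
  rw [MF, MF, MF]
  simp only [Matrix.mul_assoc, h2']
  rw [← Matrix.mul_assoc (Matrix.diagonal _) (Matrix.diagonal _), Matrix.diagonal_mul_diagonal]
  have hfun : (fun i => ((f (hY.eigenvalues i) : ℝ) : ℂ) * ((g (hY.eigenvalues i) : ℝ) : ℂ)) =
      fun i => ((f (hY.eigenvalues i) * g (hY.eigenvalues i) : ℝ) : ℂ) := by
    funext i
    push_cast
    ring
  rw [hfun]

lemma MF_trace (f : ℝ → ℝ) : (MF hY f).trace = ((∑ i, f (hY.eigenvalues i) : ℝ) : ℂ) := by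
  rw [MF, Matrix.trace_mul_cycle, MF_hU' hY, Matrix.one_mul, Matrix.trace_diagonal]
  push_cast
  rfl

end FunCalc

section Heart
variable {n : ℕ} {ι κ : Type*}
variable {A : ι → Matrix (Fin n) (Fin n) ℂ} {B : κ → Matrix (Fin n) (Fin n) ℂ}

lemma Phi_zero : Phi (0 : Matrix (Fin n × Fin n) (Fin n × Fin n) ℂ) = 0 := by
  ext p q
  simp [Phi]

lemma Phi_mul_S (hcomm : ∀ i j, A i * B j = B j * A i)
    {x y : Matrix (Fin n × Fin n) (Fin n × Fin n) ℂ}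
    (hx : x ∈ S A B) (hy : y ∈ S A B) : Phi (x * y) = Phi x * Phi y := by
  induction hx using Submodule.span_induction generalizing y with
  | mem z hz =>
      induction hy using Submodule.span_induction with
      | mem w hw =>
          obtain ⟨la, lb, rfl⟩ := hz
          obtain ⟨la', lb', rfl⟩ := hw
          rw [← Matrix.mul_kronecker_mul, Phi_kron, Phi_kron, Phi_kron]
          simp only [Matrix.mul_assoc]
          rw [← Matrix.mul_assoc ((la'.map A).prod), ← prod_comm hcomm la' lb,
            Matrix.mul_assoc]
      | zero => simp [Phi_zero]
      | add u v hu' hv' hu hv => rw [Matrix.mul_add, Phi_add, Phi_add, hu, hv, Matrix.mul_add]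
      | smul c u hu' hu => rw [mul_smul_comm, Phi_smul, Phi_smul, hu, mul_smul_comm]
  | zero => simp [Phi_zero]
  | add u v hu' hv' hu hv => rw [Matrix.add_mul, Phi_add, Phi_add, hu hy, hv hy, Matrix.add_mul]
  | smul c u hu' hu => rw [smul_mul_assoc, Phi_smul, Phi_smul, hu hy, smul_mul_assoc]

lemma Phi_star_S (hA : ∀ i, (A i).IsHermitian) (hB : ∀ j, (B j).IsHermitian)
    (hcomm : ∀ i j, A i * B j = B j * A i)
    {x : Matrix (Fin n × Fin n) (Fin n × Fin n) ℂ}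
    (hx : x ∈ S A B) : Phi (star x) = star (Phi x) := by
  induction hx using Submodule.span_induction with
  | mem z hz =>
      obtain ⟨la, lb, rfl⟩ := hz
      rw [Matrix.star_eq_conjTranspose, kron_conjTranspose, prod_star A hA, prod_star B hB,
        Phi_kron, Phi_kron, Matrix.star_eq_conjTranspose, Matrix.conjTranspose_mul,
        prod_star A hA, prod_star B hB]
      exact (prod_comm hcomm _ _).symm
  | zero => simp [Phi_zero]
  | add u v hu' hv' hu hv => rw [star_add, Phi_add, Phi_add, hu, hv, star_add]
  | smul c u hu' hu =>
      rw [star_smul, Phi_smul, Phi_smul, hu, star_smul]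

lemma inner_star_right (u W : Matrix (Fin n × Fin n) (Fin n × Fin n) ℂ) :
    (inner ℂ u (star W) : ℂ) = starRingEnd ℂ (inner ℂ (star u) W : ℂ) := by
  rw [inner_def, inner_def, Matrix.star_eq_conjTranspose, Matrix.star_eq_conjTranspose,
    Matrix.conjTranspose_conjTranspose, ← Matrix.conjTranspose_mul, Matrix.trace_conjTranspose,
    Matrix.trace_mul_comm]
  rfl

lemma proj_star (hA : ∀ i, (A i).IsHermitian) (hB : ∀ j, (B j).IsHermitian)
    (Z : Matrix (Fin n × Fin n) (Fin n × Fin n) ℂ) :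
    (↑(Submodule.orthogonalProjectionOnto (S A B) (star Z)) : Matrix (Fin n × Fin n) (Fin n × Fin n) ℂ) =
      star (↑(Submodule.orthogonalProjectionOnto (S A B) Z) : Matrix (Fin n × Fin n) (Fin n × Fin n) ℂ) := by
  refine Submodule.eq_starProjection_of_mem_orthogonal
    (star_mem_S hA hB (Submodule.orthogonalProjectionOnto (S A B) Z).2) ?_
  rw [Submodule.mem_orthogonal]
  intro u hu
  have h1 : star Z - star (↑(Submodule.orthogonalProjectionOnto (S A B) Z) :
      Matrix (Fin n × Fin n) (Fin n × Fin n) ℂ) =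
      star (Z - ↑(Submodule.orthogonalProjectionOnto (S A B) Z)) := by rw [star_sub]
  rw [h1, inner_star_right]
  have h2 : Z - ↑(Submodule.orthogonalProjectionOnto (S A B) Z) ∈ (S A B)ᗮ :=
    Submodule.sub_starProjection_mem_orthogonal (K := S A B) Z
  rw [h2 (star u) (star_mem_S hA hB hu), map_zero]

lemma proj_psd (hA : ∀ i, (A i).IsHermitian) (hB : ∀ j, (B j).IsHermitian)
    {W : Matrix (Fin n × Fin n) (Fin n × Fin n) ℂ} (hW : W.PosSemidef) :
    (↑(Submodule.orthogonalProjectionOnto (S A B) W) : Matrix (Fin n × Fin n) (Fin n × Fin n) ℂ).PosSemidef := by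
  set Y := (↑(Submodule.orthogonalProjectionOnto (S A B) W) : Matrix (Fin n × Fin n) (Fin n × Fin n) ℂ)
    with hYdef
  have hYmem : Y ∈ S A B := (Submodule.orthogonalProjectionOnto (S A B) W).2
  have hstarW : star W = W := by rw [Matrix.star_eq_conjTranspose]; exact hW.1
  have hYherm : Y.IsHermitian := by
    rw [Matrix.IsHermitian, ← Matrix.star_eq_conjTranspose, hYdef, ← proj_star hA hB W, hstarW]
  set fneg : ℝ → ℝ := fun x => max (-x) 0 with hfneg
  set Yneg := MF hYherm fneg with hYneg
  have hYnegS : Yneg ∈ S A B := by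
    obtain ⟨q, hq⟩ := MF_aeval hYherm fneg
    rw [hYneg, ← hq]
    exact aeval_mem_S hYmem q
  have hYnegpsd : Yneg.PosSemidef := MF_psd hYherm fun x => le_max_right _ _
  -- trace of Yneg * Y
  have hmul : Yneg * Y = MF hYherm (fun x => fneg x * x) := by
    have h := MF_mul hYherm fneg (fun x => x)
    rw [MF_eq_self] at h
    exact h
  have hval : ∀ x : ℝ, fneg x * x = -(fneg x ^ 2) := by
    intro x
    rcases le_total x 0 with h | h
    · rw [hfneg]
      simp only []
      rw [max_eq_left (by linarith : (0:ℝ) ≤ -x)]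
      ring
    · rw [hfneg]
      simp only []
      rw [max_eq_right (by linarith : -x ≤ (0:ℝ))]
      ring
  have htr : (Yneg * Y).trace = ((-(∑ i, fneg (hYherm.eigenvalues i) ^ 2) : ℝ) : ℂ) := by
    rw [hmul, MF_trace]
    congr 1
    rw [← Finset.sum_neg_distrib]
    exact Finset.sum_congr rfl fun i _ => hval _
  -- orthogonality
  have horth : (inner ℂ Yneg (W - Y) : ℂ) = 0 :=
    Submodule.sub_starProjection_mem_orthogonal (K := S A B) W Yneg hYnegS
  have htr2 : (Yneg * W).trace = (Yneg * Y).trace := by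
    rw [inner_def] at horth
    rw [Matrix.mul_sub, Matrix.trace_sub, sub_eq_zero, (MF_herm hYherm fneg).eq] at horth
    exact horth
  have hge : 0 ≤ (Yneg * W).trace := psd_trace_mul_nonneg hYnegpsd hW
  rw [htr2, htr] at hge
  have hsum : (∑ i, fneg (hYherm.eigenvalues i) ^ 2) ≤ 0 := by
    have := Complex.zero_le_real.mp hge
    linarith
  have hzero : ∀ i, fneg (hYherm.eigenvalues i) = 0 := by
    intro i
    have hle := Finset.single_le_sum (f := fun i => fneg (hYherm.eigenvalues i) ^ 2)
      (fun i _ => sq_nonneg _) (Finset.mem_univ i)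
    have h0 : fneg (hYherm.eigenvalues i) ^ 2 = 0 := le_antisymm (hle.trans hsum) (sq_nonneg _)
    exact pow_eq_zero_iff (by norm_num : (2:ℕ) ≠ 0) |>.mp h0
  refine hYherm.posSemidef_iff_eigenvalues_nonneg.mpr fun i => ?_
  have h := hzero i
  rw [hfneg] at h
  simp only [] at h
  have := le_max_left (-(hYherm.eigenvalues i)) 0
  rw [h] at this
  rw [Pi.zero_apply]
  linarith

lemma ell_nonneg (hA : ∀ i, (A i).IsHermitian) (hB : ∀ j, (B j).IsHermitian)
    (hcomm : ∀ i j, A i * B j = B j * A i)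
    {τ : Matrix (Fin n) (Fin n) ℂ} (hτ : τ.PosSemidef)
    {Z : Matrix (Fin n × Fin n) (Fin n × Fin n) ℂ}
    (hZ : Z ∈ S A B) (hZpsd : Z.PosSemidef) : 0 ≤ (τ * Phi Z).trace := by
  have hZh : Z.IsHermitian := hZpsd.1
  set Wr := MF hZh Real.sqrt with hWr
  have hWS : Wr ∈ S A B := by
    obtain ⟨q, hq⟩ := MF_aeval hZh Real.sqrt
    rw [hWr, ← hq]
    exact aeval_mem_S hZ q
  have hWW : Wr * Wr = Z := by
    rw [hWr, MF_mul]
    have h1 : MF hZh (fun x => Real.sqrt x * Real.sqrt x) = MF hZh (fun x => x) := by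
      unfold MF
      rw [show (fun i => ((Real.sqrt (hZh.eigenvalues i) * Real.sqrt (hZh.eigenvalues i) : ℝ) : ℂ))
          = fun i => ((hZh.eigenvalues i : ℝ) : ℂ) from funext fun i => by
        rw [Real.mul_self_sqrt (hZpsd.eigenvalues_nonneg i)]]
    rw [h1, MF_eq_self]
  have hWherm : Wr.IsHermitian := MF_herm hZh Real.sqrt
  have hPhi : Phi Z = (Phi Wr)ᴴ * Phi Wr := by
    rw [← hWW, Phi_mul_S hcomm hWS hWS]
    congr 1
    rw [← Matrix.star_eq_conjTranspose, ← Phi_star_S hA hB hcomm hWS,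
      Matrix.star_eq_conjTranspose, hWherm.eq]
  rw [hPhi, ← Matrix.mul_assoc, Matrix.trace_mul_cycle]
  exact psd_trace_nonneg (hτ.mul_mul_conjTranspose_same (Phi Wr))

end Heart

end Tsi

open Tsi

set_option maxHeartbeats 1000000 in
/-- Finite-dimensional Tsirelson theorem: two commuting finite families of positive
semidefinite matrices together with a state `τ` can be realised on a tensor product of two
finite-dimensional spaces, with a state `τ̂` reproducing all mixed correlation functions. -/
theorem stmt12 (n : ℕ) (hn : 0 < n) (ι κ : Type*) [Fintype ι] [Fintype κ]
    (A : ι → Matrix (Fin n) (Fin n) ℂ) (B : κ → Matrix (Fin n) (Fin n) ℂ)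
    (hA : ∀ i, (A i).PosSemidef) (hB : ∀ j, (B j).PosSemidef)
    (hcomm : ∀ i j, A i * B j = B j * A i)
    (τ : Matrix (Fin n) (Fin n) ℂ) (hτ : τ.PosSemidef) (hτtr : τ.trace = 1) :
    ∃ (m₁ m₂ : ℕ), 0 < m₁ ∧ 0 < m₂ ∧
      ∃ (Ahat : ι → Matrix (Fin m₁) (Fin m₁) ℂ) (Bhat : κ → Matrix (Fin m₂) (Fin m₂) ℂ)
        (τhat : Matrix (Fin m₁ × Fin m₂) (Fin m₁ × Fin m₂) ℂ),
        (∀ i, (Ahat i).PosSemidef) ∧ (∀ j, (Bhat j).PosSemidef) ∧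
        τhat.PosSemidef ∧ τhat.trace = 1 ∧
        ∀ (la : List ι) (lb : List κ),
          (τ * (la.map A).prod * (lb.map B).prod).trace =
          (τhat * ((la.map Ahat).prod ⊗ₖ (lb.map Bhat).prod)).trace := by
  classical
  have hAh : ∀ i, (A i).IsHermitian := fun i => (hA i).1
  have hBh : ∀ j, (B j).IsHermitian := fun j => (hB j).1
  -- the positive linear functional `Z ↦ Tr(τ · Φ(E Z))`
  let Lm : Matrix (Fin n × Fin n) (Fin n × Fin n) ℂ →ₗ[ℂ] ℂ :=
    { toFun := fun Z => (τ * Phi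
        ((Submodule.orthogonalProjectionOnto (S A B) Z : Matrix (Fin n × Fin n) (Fin n × Fin n) ℂ))).trace
      map_add' := by
        intro X Y
        show (τ * Phi ((Submodule.orthogonalProjectionOnto (S A B) (X + Y) :
            Matrix (Fin n × Fin n) (Fin n × Fin n) ℂ))).trace =
          (τ * Phi ((Submodule.orthogonalProjectionOnto (S A B) X :
            Matrix (Fin n × Fin n) (Fin n × Fin n) ℂ))).trace +
          (τ * Phi ((Submodule.orthogonalProjectionOnto (S A B) Y :
            Matrix (Fin n × Fin n) (Fin n × Fin n) ℂ))).trace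
        rw [map_add, Submodule.coe_add, Phi_add, Matrix.mul_add, Matrix.trace_add]
      map_smul' := by
        intro c X
        show (τ * Phi ((Submodule.orthogonalProjectionOnto (S A B) (c • X) :
            Matrix (Fin n × Fin n) (Fin n × Fin n) ℂ))).trace =
          (RingHom.id ℂ) c • (τ * Phi ((Submodule.orthogonalProjectionOnto (S A B) X :
            Matrix (Fin n × Fin n) (Fin n × Fin n) ℂ))).trace
        rw [_root_.map_smul, SetLike.val_smul, Phi_smul, mul_smul_comm, Matrix.trace_smul]
        rfl }
  have Lm_apply : ∀ Z, Lm Z = (τ * Phi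
      ((Submodule.orthogonalProjectionOnto (S A B) Z : Matrix (Fin n × Fin n) (Fin n × Fin n) ℂ))).trace :=
    fun Z => rfl
  have Lm_S : ∀ Z ∈ S A B, Lm Z = (τ * Phi Z).trace := by
    intro Z hZ
    rw [Lm_apply, Submodule.coe_orthogonalProjectionOnto_apply,
      Submodule.starProjection_eq_self_iff.mpr hZ]
  set T : Matrix (Fin n × Fin n) (Fin n × Fin n) ℂ :=
    Matrix.of (fun i j => Lm (Matrix.single j i 1)) with hT
  have hTapp : ∀ i j, T i j = Lm (Matrix.single j i 1) := fun i j => rfl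
  -- the key trace identity
  have key : ∀ W : Matrix (Fin n × Fin n) (Fin n × Fin n) ℂ, (T * W).trace = Lm W := by
    intro W
    have h1 : Lm W = ∑ a, ∑ b, W a b * Lm (Matrix.single a b 1) := by
      conv_lhs => rw [Matrix.matrix_eq_sum_single W]
      rw [map_sum]
      refine Finset.sum_congr rfl fun a _ => ?_
      rw [map_sum]
      refine Finset.sum_congr rfl fun b _ => ?_
      rw [show Matrix.single a b (W a b) = W a b • Matrix.single a b 1 by
        rw [Matrix.smul_single, smul_eq_mul, mul_one], _root_.map_smul, smul_eq_mul]
    rw [h1]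
    rw [Matrix.trace]
    simp only [Matrix.diag, Matrix.mul_apply]
    rw [Finset.sum_comm]
    refine Finset.sum_congr rfl fun a _ => Finset.sum_congr rfl fun b _ => ?_
    rw [hTapp]
    ring
  -- star compatibility
  have Lstar : ∀ Z, starRingEnd ℂ (Lm Z) = Lm (star Z) := by
    intro Z
    have hC := Phi_star_S hAh hBh hcomm (Submodule.orthogonalProjectionOnto (S A B) Z).2
    rw [Lm_apply, Lm_apply]
    calc starRingEnd ℂ ((τ * Phi ((Submodule.orthogonalProjectionOnto (S A B) Z :
          Matrix (Fin n × Fin n) (Fin n × Fin n) ℂ))).trace)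
        = ((τ * Phi ((Submodule.orthogonalProjectionOnto (S A B) Z :
            Matrix (Fin n × Fin n) (Fin n × Fin n) ℂ)))ᴴ).trace := by
          rw [Matrix.trace_conjTranspose]; rfl
      _ = ((Phi ((Submodule.orthogonalProjectionOnto (S A B) Z :
            Matrix (Fin n × Fin n) (Fin n × Fin n) ℂ)))ᴴ * τᴴ).trace := by
          rw [Matrix.conjTranspose_mul]
      _ = (τ * (Phi ((Submodule.orthogonalProjectionOnto (S A B) Z :
            Matrix (Fin n × Fin n) (Fin n × Fin n) ℂ)))ᴴ).trace := by
          rw [hτ.1, Matrix.trace_mul_comm]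
      _ = (τ * Phi (star ((Submodule.orthogonalProjectionOnto (S A B) Z :
            Matrix (Fin n × Fin n) (Fin n × Fin n) ℂ)))).trace := by
          rw [hC, Matrix.star_eq_conjTranspose]
      _ = (τ * Phi ((Submodule.orthogonalProjectionOnto (S A B) (star Z) :
            Matrix (Fin n × Fin n) (Fin n × Fin n) ℂ))).trace := by
          rw [proj_star hAh hBh Z]
  -- star of standard basis matrices
  have hstd : ∀ a b : Fin n × Fin n,
      star (Matrix.single a b (1 : ℂ)) = Matrix.single b a 1 := by
    intro a b
    rw [Matrix.star_eq_conjTranspose]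
    ext i j
    simp only [Matrix.conjTranspose_apply, Matrix.single, Matrix.of_apply]
    rw [apply_ite (star : ℂ → ℂ), star_one, star_zero]
    by_cases h : a = j ∧ b = i
    · rw [if_pos h, if_pos ⟨h.2, h.1⟩]
    · rw [if_neg h, if_neg fun hc => h ⟨hc.2, hc.1⟩]
  -- T is hermitian
  have hermT : T.IsHermitian := by
    rw [Matrix.IsHermitian]
    ext i j
    rw [Matrix.conjTranspose_apply, hTapp, hTapp]
    show starRingEnd ℂ (Lm (Matrix.single i j 1)) = Lm (Matrix.single j i 1)
    rw [Lstar, hstd]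
  -- T is positive semidefinite
  have psdT : T.PosSemidef := by
    refine Matrix.PosSemidef.of_dotProduct_mulVec_nonneg hermT fun x => ?_
    have hWx : (Matrix.vecMulVec x (star x)).PosSemidef := by
      rw [Matrix.vecMulVec_eq (Fin 1), ← Matrix.conjTranspose_replicateCol]
      exact Matrix.posSemidef_self_mul_conjTranspose _
    have hquad : star x ⬝ᵥ T *ᵥ x = (T * Matrix.vecMulVec x (star x)).trace := by
      rw [Matrix.trace]
      simp only [Matrix.diag, Matrix.mul_apply, Matrix.vecMulVec_apply, Pi.star_apply,
        dotProduct, Matrix.mulVec, Finset.mul_sum]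
      refine Finset.sum_congr rfl fun i _ => Finset.sum_congr rfl fun j _ => ?_
      ring
    rw [hquad, key]
    rw [Lm_apply]
    exact ell_nonneg hAh hBh hcomm hτ (Submodule.orthogonalProjectionOnto (S A B) _).2
      (proj_psd hAh hBh hWx)
  -- T has trace one
  have traceT : T.trace = 1 := by
    have h1 : T.trace = (T * 1).trace := by rw [Matrix.mul_one]
    rw [h1, key 1, Lm_S 1 one_mem_S]
    have h2 : Phi (1 : Matrix (Fin n × Fin n) (Fin n × Fin n) ℂ) = 1 := by
      rw [← Matrix.one_kronecker_one, Phi_kron, Matrix.one_mul]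
    rw [h2, Matrix.mul_one, hτtr]
  refine ⟨n, n, hn, hn, A, B, T, hA, hB, psdT, traceT, fun la lb => ?_⟩
  have hmem : ((la.map A).prod ⊗ₖ (lb.map B).prod) ∈ S A B :=
    Submodule.subset_span ⟨la, lb, rfl⟩
  rw [key, Lm_S _ hmem, Phi_kron, ← Matrix.mul_assoc]
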